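/- Let G be a simple graph on n ≥ 2 vertices, let d be an integer with 0 < d < n, and let 𝒫 be a finite set of size d (the set of 'pieces'). Then there exists an assignment f mapping each vertex v of G to a subset f(v) ⊆ 𝒫 with |f(v)| ≤ ⌈3 ln n⌉, such that for every vertex u of degree at least d, every piece p ∈ 𝒫 belongs to f(v) for some v in the closed neighborhood N[u] of u. -/

import Mathlib

/-- coupon-collector lemma: let `G` be a simple graph on `n ≥ 2` vertices,
`0 < d < n`, and let `pieces` be a finite set of `d` pieces. Then one can assign to each
vertex `v` a subset `f v ⊆ pieces` with `|f v| ≤ ⌈3 ln n⌉` so that for every vertex `u` of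
degree at least `d`, every piece appears at some vertex of the closed neighbourhood of `u`. -/
theorem coupon_collector_assignment
    {V α : Type*} [Fintype V] (G : SimpleGraph V) [DecidableRel G.Adj]
    (hn : 2 ≤ Fintype.card V)
    (d : ℕ) (hd0 : 0 < d) (hdn : d < Fintype.card V)
    (pieces : Finset α) (hP : pieces.card = d) :
    ∃ f : V → Finset α,
      (∀ v : V, f v ⊆ pieces ∧ (f v).card ≤ ⌈(3 : ℝ) * Real.log (Fintype.card V)⌉₊) ∧
      (∀ u : V, d ≤ G.degree u → ∀ p ∈ pieces, ∃ v : V, (v = u ∨ G.Adj u v) ∧ p ∈ f v) := by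
  classical
  set n := Fintype.card V with hn'
  set s := ⌈(3 : ℝ) * Real.log n⌉₊ with hs
  have hn0 : (0:ℕ) < n := by omega
  have hn1R : (1:ℝ) < n := by exact_mod_cast hn.trans_lt' one_lt_two
  have hlogpos : 0 < Real.log n := Real.log_pos hn1R
  have hs1 : 1 ≤ s := Nat.one_le_ceil_iff.mpr (by positivity)
  have hsreal : (3:ℝ) * Real.log n ≤ s := Nat.le_ceil _
  -- the probability space
  let P := {x : α // x ∈ pieces}
  have hPcard : Fintype.card P = d := by rw [← hP]; exact Fintype.card_coe pieces
  let Ω := V → Fin s → P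
  -- closed neighborhoods
  let Nu : V → Finset V := fun u => insert u (G.neighborFinset u)
  have hNu : ∀ u v, v ∈ Nu u ↔ v = u ∨ G.Adj u v := by
    intro u v; simp [Nu, SimpleGraph.mem_neighborFinset]
  have hNucard : ∀ u, (Nu u).card = G.degree u + 1 := by
    intro u
    rw [Finset.card_insert_of_notMem (G.notMem_neighborFinset_self u),
      SimpleGraph.card_neighborFinset_eq_degree]
  -- bad events
  let Ip : P → Finset (Fin s → P) := fun p => Fintype.piFinset fun _ => Finset.univ.erase p
  have hIpcard : ∀ p, (Ip p).card = (d-1)^s := by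
    intro p
    rw [Fintype.card_piFinset]
    simp [Finset.card_erase_of_mem, Finset.card_univ, hPcard]
  let B : V → P → Finset Ω := fun u p =>
    Fintype.piFinset (fun v => if v ∈ Nu u then Ip p else Finset.univ)
  have hBmem : ∀ u p (g : Ω), g ∈ B u p ↔ ∀ v ∈ Nu u, ∀ i, g v i ≠ p := by
    intro u p g
    rw [Fintype.mem_piFinset]
    constructor
    · intro h v hv i
      have hh := h v
      rw [if_pos hv, Fintype.mem_piFinset] at hh
      exact (Finset.mem_erase.mp (hh i)).1
    · intro h v
      by_cases hv : v ∈ Nu u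
      · rw [if_pos hv, Fintype.mem_piFinset]
        intro i
        exact Finset.mem_erase.mpr ⟨h v hv i, Finset.mem_univ _⟩
      · rw [if_neg hv]; exact Finset.mem_univ _
  -- cardinality of bad events
  have hmono : ∀ a b k m N : ℕ, a ≤ b → k ≤ m → m ≤ N →
      a^m * b^(N-m) ≤ a^k * b^(N-k) := by
    intro a b k m N hab hkm hmN
    calc a^m * b^(N-m) = a^k * (a^(m-k) * b^(N-m)) := by
          rw [← mul_assoc, ← pow_add]
          congr 2
          omega
      _ ≤ a^k * (b^(m-k) * b^(N-m)) :=
          Nat.mul_le_mul_left _ (Nat.mul_le_mul_right _ (Nat.pow_le_pow_left hab _))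
      _ = a^k * b^(N-k) := by rw [← pow_add]; congr 2; omega
  have hBcard : ∀ u : V, d ≤ G.degree u → ∀ p : P,
      (B u p).card ≤ ((d-1)^s)^(d+1) * (d^s)^(n-(d+1)) := by
    intro u hu p
    have hm1 : d + 1 ≤ (Nu u).card := by rw [hNucard]; omega
    have hm2 : (Nu u).card ≤ n := by
      simpa [hn'] using Finset.card_le_univ (Nu u)
    have hcard : (B u p).card = ((d-1)^s)^(Nu u).card * (d^s)^(n - (Nu u).card) := by
      rw [Fintype.card_piFinset]
      have : ∀ v : V, (if v ∈ Nu u then Ip p else (Finset.univ : Finset (Fin s → P))).card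
          = if v ∈ Nu u then (d-1)^s else d^s := by
        intro v
        by_cases hv : v ∈ Nu u
        · rw [if_pos hv, if_pos hv, hIpcard]
        · rw [if_neg hv, if_neg hv, Finset.card_univ, Fintype.card_fun, hPcard,
            Fintype.card_fin]
      rw [Finset.prod_congr rfl (fun v _ => this v), Finset.prod_ite, Finset.prod_const,
        Finset.prod_const, Finset.filter_univ_mem]
      congr 1
      congr 1
      have := Finset.card_filter_add_card_filter_not
        (s := (Finset.univ : Finset V)) (p := fun v => v ∈ Nu u)
      rw [Finset.filter_univ_mem] at this
      simp only [Finset.card_univ] at this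
      omega
    rw [hcard]
    exact hmono _ _ _ _ _ (Nat.pow_le_pow_left (Nat.sub_le d 1) s) hm1 hm2
  -- the bad set
  let Bad : Finset Ω := Finset.univ.filter
    (fun g : Ω => ∃ u : V, d ≤ G.degree u ∧ ∃ p : P, ∀ v ∈ Nu u, ∀ i, g v i ≠ p)
  have hBadsub : Bad ⊆ (Finset.univ.filter (fun u : V => d ≤ G.degree u)).biUnion
      (fun u => Finset.univ.biUnion (fun p : P => B u p)) := by
    intro g hg
    rw [Finset.mem_filter] at hg
    obtain ⟨-, u, hu, p, hp⟩ := hg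
    refine Finset.mem_biUnion.mpr ⟨u, Finset.mem_filter.mpr ⟨Finset.mem_univ _, hu⟩, ?_⟩
    exact Finset.mem_biUnion.mpr ⟨p, Finset.mem_univ _, (hBmem u p g).mpr hp⟩
  have hBadcard : Bad.card ≤ n * (d * (((d-1)^s)^(d+1) * (d^s)^(n-(d+1)))) := by
    calc Bad.card ≤ ∑ u ∈ Finset.univ.filter (fun u : V => d ≤ G.degree u),
          (Finset.univ.biUnion (fun p : P => B u p)).card :=
        (Finset.card_le_card hBadsub).trans (Finset.card_biUnion_le)
      _ ≤ ∑ u ∈ Finset.univ.filter (fun u : V => d ≤ G.degree u),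
          (d * (((d-1)^s)^(d+1) * (d^s)^(n-(d+1)))) := by
        refine Finset.sum_le_sum fun u hu => ?_
        have hu' := (Finset.mem_filter.mp hu).2
        calc (Finset.univ.biUnion (fun p : P => B u p)).card
            ≤ ∑ p : P, (B u p).card := Finset.card_biUnion_le
          _ ≤ ∑ _p : P, (((d-1)^s)^(d+1) * (d^s)^(n-(d+1))) :=
            Finset.sum_le_sum fun p _ => hBcard u hu' p
          _ = d * (((d-1)^s)^(d+1) * (d^s)^(n-(d+1))) := by
            rw [Finset.sum_const, Finset.card_univ, hPcard, smul_eq_mul]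
      _ ≤ n * (d * (((d-1)^s)^(d+1) * (d^s)^(n-(d+1)))) := by
        rw [Finset.sum_const, smul_eq_mul]
        exact Nat.mul_le_mul_right _ ((Finset.card_filter_le _ _).trans_eq
          (by rw [Finset.card_univ]))
  -- the key inequality
  have hkey : n * (d * ((d-1)^s)^(d+1)) < (d^s)^(d+1) := by
    have hdR : (0:ℝ) < d := by exact_mod_cast hd0
    set E := s * (d+1) with hE
    have hrw : ∀ a : ℕ, (a^s)^(d+1) = a^E := fun a => by rw [hE, pow_mul]
    rw [hrw, hrw]
    have hcast : ((d-1 : ℕ) : ℝ) = (d:ℝ) - 1 := by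
      push_cast [Nat.cast_sub hd0]; ring
    -- real version
    have hR : (n:ℝ) * (d * ((d:ℝ)-1)^E) < (d:ℝ)^E := by
      have hsplit : ((d:ℝ)-1)^E = (1 - 1/d)^E * (d:ℝ)^E := by
        rw [← mul_pow]
        congr 1
        field_simp
      have h0 : (0:ℝ) ≤ 1 - 1/d := by
        rw [sub_nonneg]
        rw [div_le_one hdR]
        exact_mod_cast hd0
      have h2 : (1:ℝ) - 1/d ≤ Real.exp (-(1/d)) := by
        have := Real.add_one_le_exp (-(1/(d:ℝ)))
        linarith
      have h3 : ((1:ℝ) - 1/d)^E ≤ Real.exp (-(1/d))^E := pow_le_pow_left₀ h0 h2 E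
      have h4 : Real.exp (-(1/(d:ℝ)))^E = Real.exp (-(E/(d:ℝ))) := by
        rw [← Real.exp_nat_mul]
        congr 1
        field_simp
      have h5 : Real.exp (-((E:ℝ)/(d:ℝ))) ≤ Real.exp (-(s:ℝ)) := by
        apply Real.exp_le_exp.mpr
        rw [neg_le_neg_iff, le_div_iff₀ hdR]
        have : s * d ≤ E := by rw [hE]; exact Nat.mul_le_mul_left s (by omega)
        exact_mod_cast this
      have h6 : Real.exp (-(s:ℝ)) ≤ ((n:ℝ)⁻¹)^3 := by
        have : Real.exp (-(s:ℝ)) ≤ Real.exp (-((3:ℝ) * Real.log n)) :=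
          Real.exp_le_exp.mpr (by linarith)
        refine this.trans_eq ?_
        rw [show -((3:ℝ) * Real.log n) = (3:ℕ) * (-Real.log n) by push_cast; ring,
          Real.exp_nat_mul, Real.exp_neg, Real.exp_log (by positivity)]
      have hbound : ((1:ℝ) - 1/d)^E ≤ ((n:ℝ)⁻¹)^3 :=
        h3.trans ((h4.le.trans h5).trans h6)
      have hmain : (n:ℝ) * d * (1-1/d)^E < 1 := by
        have hnR : (0:ℝ) < n := by exact_mod_cast hn0
        have step1 : (n:ℝ) * d * (1-1/d)^E ≤ (n:ℝ) * d * ((n:ℝ)⁻¹)^3 := by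
          apply mul_le_mul_of_nonneg_left hbound (by positivity)
        have hdnR : (d:ℝ) < n := by exact_mod_cast hdn
        have step2 : (n:ℝ) * d * ((n:ℝ)⁻¹)^3 < (n:ℝ) * n * ((n:ℝ)⁻¹)^3 := by
          have : (n:ℝ) * d < n * n := by nlinarith
          exact mul_lt_mul_of_pos_right this (by positivity)
        have step3 : (n:ℝ) * n * ((n:ℝ)⁻¹)^3 = (n:ℝ)⁻¹ := by
          field_simp
        have step4 : (n:ℝ)⁻¹ < 1 := inv_lt_one_of_one_lt₀ hn1R
        linarith
      calc (n:ℝ) * (d * ((d:ℝ)-1)^E) = ((n:ℝ) * d * (1-1/d)^E) * (d:ℝ)^E := by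
            rw [hsplit]; ring
        _ < 1 * (d:ℝ)^E := mul_lt_mul_of_pos_right hmain (pow_pos hdR E)
        _ = (d:ℝ)^E := one_mul _
    have := hR
    rw [← hcast] at this
    exact_mod_cast (by push_cast at this ⊢; exact this : ((n * (d * (d-1)^E) : ℕ) : ℝ) < ((d^E : ℕ) : ℝ))
  -- conclude Bad.card < card Ω
  have hΩcard : Fintype.card Ω = (d^s)^(d+1) * (d^s)^(n-(d+1)) := by
    show Fintype.card (V → Fin s → P) = _
    rw [Fintype.card_fun, Fintype.card_fun, hPcard, Fintype.card_fin, ← hn', ← pow_add]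
    congr 1
    omega
  have hlt : Bad.card < Fintype.card Ω := by
    rw [hΩcard]
    refine hBadcard.trans_lt ?_
    have hpos : 0 < (d^s)^(n-(d+1)) := pow_pos (pow_pos hd0 _) _
    calc n * (d * (((d-1)^s)^(d+1) * (d^s)^(n-(d+1))))
        = (n * (d * ((d-1)^s)^(d+1))) * (d^s)^(n-(d+1)) := by ring
      _ < (d^s)^(d+1) * (d^s)^(n-(d+1)) := by
          exact (Nat.mul_lt_mul_right hpos).mpr hkey
  obtain ⟨g, hg⟩ : ∃ g : Ω, g ∉ Bad := by
    by_contra h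
    push_neg at h
    have : (Finset.univ : Finset Ω) ⊆ Bad := fun g _ => h g
    have := Finset.card_le_card this
    rw [Finset.card_univ] at this
    omega
  -- g is a good assignment
  have hgood : ∀ u : V, d ≤ G.degree u → ∀ p : P, ∃ v ∈ Nu u, ∃ i, g v i = p := by
    intro u hu p
    by_contra h
    push_neg at h
    exact hg (Finset.mem_filter.mpr ⟨Finset.mem_univ _, u, hu, p, fun v hv i => h v hv i⟩)
  refine ⟨fun v => Finset.univ.image (fun i => (g v i : α)), fun v => ⟨?_, ?_⟩, ?_⟩
  · intro x hx
    obtain ⟨i, -, rfl⟩ := Finset.mem_image.mp hx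
    exact (g v i).2
  · exact (Finset.card_image_le).trans (by simp)
  · intro u hu p hp
    obtain ⟨v, hv, i, hi⟩ := hgood u hu ⟨p, hp⟩
    exact ⟨v, (hNu u v).mp hv, Finset.mem_image.mpr ⟨i, Finset.mem_univ _,
      by rw [hi]⟩⟩
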